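/- Let 𝒜 be a maximal almost disjoint family of infinite subsets of ℕ: the members of 𝒜 are infinite, any two distinct members have finite intersection, and every infinite subset of ℕ has infinite intersection with some member of 𝒜. Then for every infinite partition X of ℕ there exist an infinite partition P coarser than X and a member a ∈ 𝒜 such that Min(P) \ a is finite. (This is the density claim in the proof of the paper's Fact 2.4.) -/
import Mathlib


/-- The set of infinite partitions of ℕ, identified with equivalence relations
on ℕ with infinite quotient. -/
abbrev InfPart := {X : Setoid ℕ // Infinite (Quotient X)}

/-- The dual Ellentuck neighborhood `[s,X]_n`: all infinite partitions `Y` such that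
`s` is an `n`-segment of `Y` and `Y` is coarser than `X`. -/
def nbhd (n : ℕ) (s : ℕ → ℕ → Prop) (X : InfPart) : Set InfPart :=
  {Y | (∀ i < n, ∀ j < n, (s i j ↔ Y.1.r i j)) ∧ ∀ a b, X.1.r a b → Y.1.r a b}

/-- The condition for `[s,X]_n` to be a (nonempty-typed) dual Ellentuck neighborhood:
`∀ i j < n, X.r i j → s i j`. -/
def IsNbhd (n : ℕ) (s : ℕ → ℕ → Prop) (X : InfPart) : Prop :=
  ∀ i < n, ∀ j < n, (X.1.r i j → s i j)


/-- A partition Y is coarser than X. -/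
def Coarser (Y X : Setoid ℕ) : Prop := ∀ n m, X.r n m → Y.r n m

/-- Min(X): the set of least elements of the blocks of X. -/
def MinSet (X : Setoid ℕ) : Set ℕ := {k | ∀ m, X.r k m → k ≤ m}

/-- For a maximal almost disjoint family 𝒜 and every infinite partition X there is an
infinite partition P coarser than X with Min(P) almost contained in some a ∈ 𝒜. -/
theorem mad_dense (A : Set (Set ℕ))
    (hinf : ∀ a ∈ A, a.Infinite)
    (had : ∀ a ∈ A, ∀ b ∈ A, a ≠ b → (a ∩ b).Finite)
    (hmax : ∀ x : Set ℕ, x.Infinite → ∃ a ∈ A, (x ∩ a).Infinite)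
    (X : InfPart) :
    ∃ P : InfPart, Coarser P.1 X.1 ∧ ∃ a ∈ A, (MinSet P.1 \ a).Finite := by
  classical
  -- MinSet X is infinite
  have hX : Infinite (Quotient X.1) := X.2
  have hfind : ∀ q : Quotient X.1, ∃ n, Quotient.mk X.1 n = q := fun q => Quotient.exists_rep q
  set f : Quotient X.1 → ℕ := fun q => Nat.find (hfind q) with hf
  have hfspec : ∀ q, Quotient.mk X.1 (f q) = q := fun q => Nat.find_spec (hfind q)
  have hfmem : ∀ q, f q ∈ MinSet X.1 := by
    intro q m hm
    exact Nat.find_min' (hfind q) (by rw [← hfspec q]; exact Quotient.sound (X.1.symm hm))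
  have hfinj : Function.Injective f := fun q q' h => by
    rw [← hfspec q, ← hfspec q', h]
  have hMinf : (MinSet X.1).Infinite :=
    Set.infinite_of_injective_forall_mem (f := f) hfinj hfmem
  obtain ⟨a, haA, haInf⟩ := hmax _ hMinf
  -- G x : the X-block of x has its min in a
  set G : ℕ → Prop := fun x => ∃ k, k ∈ a ∧ k ∈ MinSet X.1 ∧ X.1.r x k with hG
  have hGinv : ∀ x y, X.1.r x y → G y → G x := by
    rintro x y hxy ⟨k, hk1, hk2, hk3⟩
    exact ⟨k, hk1, hk2, X.1.trans hxy hk3⟩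
  -- the coarser partition
  set r : ℕ → ℕ → Prop := fun x y => X.1.r x y ∨ (¬ G x ∧ ¬ G y) with hr
  have hrefl : ∀ x, r x x := fun x => Or.inl (X.1.refl x)
  have hsymm : ∀ {x y}, r x y → r y x := by
    rintro x y (h | ⟨h1, h2⟩)
    · exact Or.inl (X.1.symm h)
    · exact Or.inr ⟨h2, h1⟩
  have htrans : ∀ {x y z}, r x y → r y z → r x z := by
    rintro x y z (h | ⟨h1, h2⟩) (h' | ⟨h1', h2'⟩)
    · exact Or.inl (X.1.trans h h')
    · exact Or.inr ⟨fun hx => h1' (hGinv y x (X.1.symm h) hx), h2'⟩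
    · exact Or.inr ⟨h1, fun hz => h2 (hGinv y z h' hz)⟩
    · exact Or.inr ⟨h1, h2'⟩
  set S : Setoid ℕ := ⟨r, hrefl, fun h => hsymm h, fun h h' => htrans h h'⟩ with hS
  -- S has infinite quotient
  have hSinf : Infinite (Quotient S) := by
    haveI : Infinite (MinSet X.1 ∩ a : Set ℕ) := haInf.to_subtype
    refine Infinite.of_injective
      (fun k : (MinSet X.1 ∩ a : Set ℕ) => (Quotient.mk S k.1 : Quotient S)) ?_
    rintro ⟨k, hk⟩ ⟨k', hk'⟩ h
    have hrel : r k k' := Quotient.exact h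
    have hGk : G k := ⟨k, hk.2, hk.1, X.1.refl k⟩
    rcases hrel with h | ⟨h1, _⟩
    · exact Subtype.ext (le_antisymm (hk.1 k' h) (hk'.1 k (X.1.symm h)))
    · exact absurd hGk h1
  refine ⟨⟨S, hSinf⟩, fun n m h => Or.inl h, a, haA, ?_⟩
  -- MinSet S \ a has at most one element
  have hsub : MinSet S \ a ⊆ {x | ¬ G x ∧ ∀ y, ¬ G y → x ≤ y} := by
    rintro x ⟨hx, hxa⟩
    have hGx : ¬ G x := by
      intro hGx
      obtain ⟨k, hk1, hk2, hk3⟩ := hGx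
      have : x ≤ k := hx k (Or.inl hk3)
      have : k ≤ x := hk2 x (X.1.symm hk3)
      have : x = k := le_antisymm (hx k (Or.inl hk3)) this
      exact hxa (this ▸ hk1)
    exact ⟨hGx, fun y hy => hx y (Or.inr ⟨hGx, hy⟩)⟩
  refine Set.Finite.subset ?_ hsub
  apply Set.Subsingleton.finite
  rintro x ⟨hx1, hx2⟩ y ⟨hy1, hy2⟩
  exact le_antisymm (hx2 y hy1) (hy2 x hx1)
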